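/- There is no (3,2,1) projection n-cube for n ≥ 6, and a (3,2,1) projection 5-cube exists; explicitly, the set {(1,1,1,1,1), (1,2,2,2,2), (2,1,2,3,3), (2,3,3,1,2), (3,2,3,3,1), (3,3,1,2,3)} ⊆ {1,2,3}⁵ is the support of a (3,2,1) projection 5-cube. -/

import Mathlib

open Finset

/-- A symmetric (v,k,λ) design: a v×v {0,1}-matrix A with A·Aᵗ = (k-λ)I + λJ. -/
def IsSymDesign (v k lam : ℕ) (A : Matrix (Fin v) (Fin v) ℤ) : Prop :=
  (∀ i j, A i j = 0 ∨ A i j = 1) ∧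
  A * A.transpose = (k - lam : ℤ) • (1 : Matrix (Fin v) (Fin v) ℤ) +
    (lam : ℤ) • Matrix.of (fun _ _ => (1 : ℤ))

/-- The 2-dimensional projection Π_{xy}(C) of an n-dimensional matrix C. -/
def proj (n v : ℕ) (C : (Fin n → Fin v) → ℤ) (x y : Fin n) :
    Matrix (Fin v) (Fin v) ℤ :=
  Matrix.of fun i j =>
    ∑ t ∈ Finset.univ.filter (fun t : Fin n → Fin v => t x = i ∧ t y = j), C t

/-- A (v,k,λ) projection n-cube: a {0,1}-valued n-dimensional matrix all of whose
2-dimensional projections are symmetric (v,k,λ) designs. -/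
def IsProjCube (n v k lam : ℕ) (C : (Fin n → Fin v) → ℤ) : Prop :=
  (∀ t, C t = 0 ∨ C t = 1) ∧
  ∀ x y : Fin n, x < y → IsSymDesign v k lam (proj n v C x y)

lemma sum_indicator {n : ℕ} (C : (Fin n → Fin 3) → ℤ) (h : ∀ t, C t = 0 ∨ C t = 1)
    (T : Finset (Fin n → Fin 3)) :
    ∑ t ∈ T, C t = ((T.filter (fun t => C t = 1)).card : ℤ) := by
  rw [Finset.card_filter]
  push_cast
  refine Finset.sum_congr rfl fun t _ => ?_
  rcases h t with h1 | h1 <;> simp [h1]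

lemma design_row {A : Matrix (Fin 3) (Fin 3) ℤ} (hA : IsSymDesign 3 2 1 A) (i : Fin 3) :
    ∑ j, A i j = 2 := by
  have h := congrFun (congrFun hA.2 i) i
  simp only [Matrix.mul_apply, Matrix.transpose_apply, Matrix.add_apply,
    Matrix.smul_apply, Matrix.one_apply_eq, Matrix.of_apply, smul_eq_mul] at h
  have e : ∀ j, A i j * A i j = A i j := fun j => by
    rcases hA.1 i j with h1 | h1 <;> rw [h1] <;> ring
  simp only [e] at h
  rw [h]; norm_num

lemma design_col {A : Matrix (Fin 3) (Fin 3) ℤ} (hA : IsSymDesign 3 2 1 A) (j : Fin 3) :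
    ∑ i, A i j = 2 := by
  set c : Fin 3 → ℤ := fun j => ∑ i, A i j with hc
  have hsum : c 0 + c 1 + c 2 = 6 := by
    have : ∑ j, c j = ∑ i, ∑ j, A i j := Finset.sum_comm
    simp only [design_row hA] at this
    simpa [Fin.sum_univ_three] using this
  have hsq : c 0 ^ 2 + c 1 ^ 2 + c 2 ^ 2 = 12 := by
    have h1 : ∑ i, ∑ k, (A * A.transpose) i k = ∑ m, c m ^ 2 := by
      simp only [Matrix.mul_apply, Matrix.transpose_apply]
      have e : ∀ m : Fin 3, c m ^ 2 = ∑ i, ∑ k, A i m * A k m := fun m => by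
        rw [sq]; exact Finset.sum_mul_sum _ _ _ _
      simp only [e]
      rw [show (∑ m, ∑ i, ∑ k, A i m * A k m) = ∑ i, ∑ m, ∑ k, A i m * A k m from
        Finset.sum_comm]
      exact Finset.sum_congr rfl fun i _ => Finset.sum_comm
    have h2 : ∑ i, ∑ k, (A * A.transpose) i k = 12 := by
      rw [hA.2]
      simp [Matrix.add_apply, Matrix.smul_apply, Matrix.one_apply, Fin.sum_univ_three]
    rw [h2] at h1
    simpa [Fin.sum_univ_three] using h1.symm
  have key : ∀ m : Fin 3, c m = 2 := by
    have h0 : (c 0 - 2)^2 + (c 1 - 2)^2 + (c 2 - 2)^2 = 0 := by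
      linear_combination hsq - 4 * hsum
    have e0 : c 0 = 2 := by nlinarith [sq_nonneg (c 0 - 2), sq_nonneg (c 1 - 2), sq_nonneg (c 2 - 2)]
    have e1 : c 1 = 2 := by nlinarith [sq_nonneg (c 0 - 2), sq_nonneg (c 1 - 2), sq_nonneg (c 2 - 2)]
    have e2 : c 2 = 2 := by nlinarith [sq_nonneg (c 0 - 2), sq_nonneg (c 1 - 2), sq_nonneg (c 2 - 2)]
    intro m
    fin_cases m <;> assumption
  exact key j

lemma cell_card {n : ℕ} {C : (Fin n → Fin 3) → ℤ} (hC : IsProjCube n 3 2 1 C)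
    {x y : Fin n} (i j : Fin 3) :
    proj n 3 C x y i j
      = ((univ.filter fun t => (t x = i ∧ t y = j) ∧ C t = 1).card : ℤ) := by
  simp only [proj, Matrix.of_apply]
  rw [sum_indicator C hC.1, Finset.filter_filter]

lemma fiber_split {n : ℕ} (C : (Fin n → Fin 3) → ℤ) (x y : Fin n) (hxy : x ≠ y) (i : Fin 3) :
    ((univ.filter fun t : Fin n → Fin 3 => t x = i ∧ C t = 1).card : ℤ)
      = ∑ j, ((univ.filter fun t => (t x = i ∧ t y = j) ∧ C t = 1).card : ℤ) := by
  have h : (univ.filter fun t : Fin n → Fin 3 => t x = i ∧ C t = 1).card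
      = ∑ j : Fin 3, ((univ.filter fun t : Fin n → Fin 3 => t x = i ∧ C t = 1).filter
          fun t => t y = j).card :=
    Finset.card_eq_sum_card_fiberwise fun t _ => mem_univ (t y)
  have e : ∀ j : Fin 3,
      ((univ.filter fun t : Fin n → Fin 3 => t x = i ∧ C t = 1).filter fun t => t y = j)
        = univ.filter fun t => (t x = i ∧ t y = j) ∧ C t = 1 := by
    intro j; ext t
    simp only [Finset.mem_filter, Finset.mem_univ, true_and]; tauto
  rw [h]; push_cast
  exact Finset.sum_congr rfl fun j _ => by rw [e j]

lemma row_count {n : ℕ} {C : (Fin n → Fin 3) → ℤ} (hC : IsProjCube n 3 2 1 C)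
    {x y : Fin n} (hxy : x < y) (i : Fin 3) :
    ((univ.filter fun t => t x = i ∧ C t = 1).card : ℤ) = 2 := by
  rw [fiber_split C x y (ne_of_lt hxy) i]
  have := design_row (hC.2 x y hxy) i
  simp only [cell_card hC] at this
  exact this

lemma col_count {n : ℕ} {C : (Fin n → Fin 3) → ℤ} (hC : IsProjCube n 3 2 1 C)
    {x y : Fin n} (hxy : x < y) (j : Fin 3) :
    ((univ.filter fun t => t y = j ∧ C t = 1).card : ℤ) = 2 := by
  rw [fiber_split C y x (ne_of_lt hxy).symm j]
  have := design_col (hC.2 x y hxy) j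
  simp only [cell_card hC] at this
  rw [← this]
  refine Finset.sum_congr rfl fun i _ => ?_
  congr 1
  exact congrArg Finset.card (by
    ext t; simp only [Finset.mem_filter, Finset.mem_univ, true_and]; tauto)

lemma no_two_agree {n : ℕ} {C : (Fin n → Fin 3) → ℤ} (hC : IsProjCube n 3 2 1 C)
    {x y : Fin n} (hxy : x < y) {s t : Fin n → Fin 3} (hs : C s = 1) (ht : C t = 1)
    (hst : s ≠ t) (hx : s x = t x) (hy : s y = t y) : False := by
  have h1 : proj n 3 C x y (s x) (s y)
      = ((univ.filter fun u => (u x = s x ∧ u y = s y) ∧ C u = 1).card : ℤ) :=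
    cell_card hC _ _
  have hsub : ({s, t} : Finset (Fin n → Fin 3))
      ⊆ univ.filter fun u => (u x = s x ∧ u y = s y) ∧ C u = 1 := by
    intro u hu
    simp only [Finset.mem_insert, Finset.mem_singleton] at hu
    rcases hu with rfl | rfl <;> simp [hs, ht, hx.symm, hy.symm]
  have h2 : 2 ≤ (univ.filter fun u => (u x = s x ∧ u y = s y) ∧ C u = 1).card := by
    have := Finset.card_le_card hsub
    rwa [Finset.card_pair hst] at this
  have h4 : (2 : ℤ) ≤ ((univ.filter fun u => (u x = s x ∧ u y = s y) ∧ C u = 1).card : ℤ) := by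
    exact_mod_cast h2
  rcases (hC.2 x y hxy).1 (s x) (s y) with h | h <;> rw [h] at h1 <;> linarith

def S5 : Finset (Fin 5 → Fin 3) :=
  {![0, 0, 0, 0, 0], ![0, 1, 1, 1, 1], ![1, 0, 1, 2, 2],
   ![1, 2, 2, 0, 1], ![2, 1, 2, 2, 0], ![2, 2, 0, 1, 2]}

def C5 : (Fin 5 → Fin 3) → ℤ := fun t => if t ∈ S5 then 1 else 0

set_option maxRecDepth 100000 in
lemma C5_cube : IsProjCube 5 3 2 1 C5 := by
  unfold IsProjCube IsSymDesign proj; simp only [Matrix.of_apply]; decide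

set_option maxRecDepth 100000 in
lemma C5_supp : ∀ t : Fin 5 → Fin 3, C5 t = 1 ↔ t ∈ S5 := by decide

theorem projCube_321 :
    (∀ n : ℕ, 6 ≤ n → ∀ C : (Fin n → Fin 3) → ℤ, ¬ IsProjCube n 3 2 1 C) ∧
    (∃ C : (Fin 5 → Fin 3) → ℤ, IsProjCube 5 3 2 1 C ∧
      ∀ t : Fin 5 → Fin 3, C t = 1 ↔
        t ∈ ({![0, 0, 0, 0, 0], ![0, 1, 1, 1, 1], ![1, 0, 1, 2, 2],
              ![1, 2, 2, 0, 1], ![2, 1, 2, 2, 0], ![2, 2, 0, 1, 2]} :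
            Finset (Fin 5 → Fin 3))) := by
  constructor
  · intro n hn C hC
    set x0 : Fin n := ⟨0, by omega⟩ with hx0
    set y0 : Fin n := ⟨1, by omega⟩ with hy0
    have hx0y0 : x0 < y0 := by simp [hx0, hy0, Fin.lt_def]
    -- |S| = 6
    have h6 : ((univ.filter fun t : Fin n → Fin 3 => C t = 1).card : ℤ) = 6 := by
      have h : (univ.filter fun t : Fin n → Fin 3 => C t = 1).card
          = ∑ i : Fin 3, ((univ.filter fun t : Fin n → Fin 3 => C t = 1).filter
              fun t => t x0 = i).card :=
        Finset.card_eq_sum_card_fiberwise fun t _ => mem_univ (t x0)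
      have e : ∀ i : Fin 3,
          ((univ.filter fun t : Fin n → Fin 3 => C t = 1).filter fun t => t x0 = i)
            = univ.filter fun t => t x0 = i ∧ C t = 1 := by
        intro i; ext t
        simp only [Finset.mem_filter, Finset.mem_univ, true_and]; tauto
      rw [h]; push_cast
      simp only [e]
      rw [Finset.sum_congr rfl fun i _ => row_count hC hx0y0 i]
      norm_num
    have h6' : (univ.filter fun t : Fin n → Fin 3 => C t = 1).card = 6 := by
      exact_mod_cast h6
    have hS : (univ.filter fun t : Fin n → Fin 3 => C t = 1).Nonempty := by
      rw [← Finset.card_pos, h6']; norm_num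
    obtain ⟨t0, ht0⟩ := hS
    have ht0' : C t0 = 1 := (Finset.mem_filter.mp ht0).2
    -- counts at each coordinate
    have hcount : ∀ x : Fin n,
        (univ.filter fun t => t x = t0 x ∧ C t = 1).card = 2 := by
      intro x
      by_cases hx : x = x0
      · rw [hx]; exact_mod_cast row_count hC hx0y0 (t0 x0)
      · have hlt : x0 < x := by
          rw [Fin.lt_def]
          rcases Nat.eq_zero_or_pos (x : ℕ) with h0 | h0
          · exact absurd (Fin.ext h0) hx
          · exact h0
        exact_mod_cast col_count hC hlt (t0 x)
    -- partner function
    have hne : ∀ x : Fin n,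
        ((univ.filter fun t => t x = t0 x ∧ C t = 1).erase t0).Nonempty := by
      intro x
      rw [← Finset.card_pos, Finset.card_erase_of_mem (by simp [ht0']), hcount x]
      norm_num
    set p : Fin n → (Fin n → Fin 3) := fun x => (hne x).choose with hp
    have hpmem : ∀ x, p x ∈ (univ.filter fun t => t x = t0 x ∧ C t = 1).erase t0 :=
      fun x => (hne x).choose_spec
    have hpne : ∀ x, p x ≠ t0 := fun x => (Finset.mem_erase.mp (hpmem x)).1
    have hpC : ∀ x, C (p x) = 1 :=
      fun x => (Finset.mem_filter.mp (Finset.mem_erase.mp (hpmem x)).2).2.2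
    have hpx : ∀ x, p x x = t0 x :=
      fun x => (Finset.mem_filter.mp (Finset.mem_erase.mp (hpmem x)).2).2.1
    -- injectivity
    have hinj : Set.InjOn p (univ : Finset (Fin n)) := by
      intro a _ b _ hab
      by_contra hne'
      have key : ∀ u v : Fin n, u < v → p u = p v → False := by
        intro u v huv hpuv
        exact no_two_agree hC huv ht0' (hpC u) (Ne.symm (hpne u))
          (hpx u).symm (by rw [hpuv]; exact (hpx v).symm)
      rcases lt_trichotomy a b with h | h | h
      · exact key a b h hab
      · exact hne' h
      · exact key b a h hab.symm
    have hmaps : ∀ x ∈ (univ : Finset (Fin n)),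
        p x ∈ (univ.filter fun t : Fin n → Fin 3 => C t = 1).erase t0 := by
      intro x _
      exact Finset.mem_erase.mpr ⟨hpne x, Finset.mem_filter.mpr ⟨mem_univ _, hpC x⟩⟩
    have := Finset.card_le_card_of_injOn p hmaps hinj
    rw [Finset.card_univ, Fintype.card_fin,
      Finset.card_erase_of_mem ht0, h6'] at this
    omega
  · exact ⟨C5, C5_cube, C5_supp⟩
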